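/- Let P be a finite point set in ℝ² and let H be a Jordan curve in the plane such that some point p ∈ P lies in the bounded region enclosed by H, and the open disk of radius dist(x,P) centered at x avoids P for each x ∈ H. Then for any x ∈ H, there exists x' ∈ H such that the closed disks B(x, dist(x,P)) and B(x', dist(x',P)) have disjoint interiors. -/
import Mathlib


open Metric Set

/-- If a point p of P lies in the bounded region enclosed by a Jordan curve H,
and the open disk of radius dist(x,P) centered at x avoids P for each x ∈ H,
then for every x ∈ H there is an x' ∈ H whose maximal empty disks have
disjoint interiors. -/
theorem disjoint_empty_disks_on_jordan_curve
    (P : Finset (EuclideanSpace ℝ (Fin 2)))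
    (f : ℝ → EuclideanSpace ℝ (Fin 2))
    (hf : Continuous f) (hloop : f 0 = f 1)
    (hinj : Set.InjOn f (Set.Ico (0:ℝ) 1))
    (H : Set (EuclideanSpace ℝ (Fin 2))) (hH : H = f '' Set.Icc (0:ℝ) 1)
    (p : EuclideanSpace ℝ (Fin 2)) (hp : p ∈ P) (hpH : p ∉ H)
    (hbounded : Bornology.IsBounded (connectedComponentIn Hᶜ p))
    (hempty : ∀ x ∈ H, ∀ p' ∈ P,
      p' ∉ ball x (Metric.infDist x (P : Set (EuclideanSpace ℝ (Fin 2))))) :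
    ∀ x ∈ H, ∃ x' ∈ H,
      ball x (Metric.infDist x (P : Set (EuclideanSpace ℝ (Fin 2)))) ∩
        ball x' (Metric.infDist x' (P : Set (EuclideanSpace ℝ (Fin 2)))) = ∅ := by
  intro x hx
  have hpx : p ≠ x := fun h => hpH (h ▸ hx)
  set v := p - x with hv
  have hv0 : v ≠ 0 := sub_ne_zero.mpr hpx
  have hvnorm : (0:ℝ) < ‖v‖ := norm_pos_iff.mpr hv0
  -- find t ≥ 0 with p + t • v ∈ H
  have hexist : ∃ t : ℝ, 0 ≤ t ∧ p + t • v ∈ H := by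
    by_contra hcon
    push_neg at hcon
    have hsub : (fun t : ℝ => p + t • v) '' Set.Ici 0 ⊆ Hᶜ := by
      rintro _ ⟨t, ht, rfl⟩; exact hcon t ht
    have hconn : IsPreconnected ((fun t : ℝ => p + t • v) '' Set.Ici 0) := by
      apply IsPreconnected.image isPreconnected_Ici
      exact Continuous.continuousOn (by continuity)
    have hmem : p ∈ (fun t : ℝ => p + t • v) '' Set.Ici 0 :=
      ⟨0, Set.self_mem_Ici, by simp⟩
    have hsub2 : (fun t : ℝ => p + t • v) '' Set.Ici 0 ⊆ connectedComponentIn Hᶜ p :=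
      hconn.subset_connectedComponentIn hmem hsub
    obtain ⟨r, hr⟩ := (Metric.isBounded_iff_subset_closedBall p).mp (hbounded.subset hsub2)
    set t := (|r| + 1) / ‖v‖ with htdef
    have ht0 : 0 ≤ t := by positivity
    have hmem2 : p + t • v ∈ Metric.closedBall p r :=
      hr ⟨t, ht0, rfl⟩
    rw [Metric.mem_closedBall] at hmem2
    have : dist (p + t • v) p = |r| + 1 := by
      rw [dist_eq_norm, add_sub_cancel_left, norm_smul, Real.norm_eq_abs,
        abs_of_nonneg ht0, htdef]
      field_simp
    rw [this] at hmem2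
    have : r ≤ |r| := le_abs_self r
    linarith
  obtain ⟨t, ht0, hx'H⟩ := hexist
  have htpos : 0 < t := by
    rcases lt_or_eq_of_le ht0 with h | h
    · exact h
    · exfalso; apply hpH; simpa [← h] using hx'H
  set x' := p + t • v with hx'
  refine ⟨x', hx'H, ?_⟩
  -- distances
  have hdxp : dist x p = ‖v‖ := by rw [dist_comm, dist_eq_norm]
  have hdpx' : dist p x' = t * ‖v‖ := by
    rw [dist_comm, dist_eq_norm]
    simp [hx', norm_smul, abs_of_nonneg ht0]
  have hdxx' : dist x x' = ‖v‖ + t * ‖v‖ := by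
    rw [dist_comm, dist_eq_norm]
    have : x' - x = (1 + t) • v := by
      simp [hx', hv]; module
    rw [this, norm_smul, Real.norm_eq_abs, abs_of_nonneg (by linarith)]
    ring
  have h1 : Metric.infDist x (P : Set (EuclideanSpace ℝ (Fin 2))) ≤ dist x p :=
    Metric.infDist_le_dist_of_mem (by exact_mod_cast hp)
  have h2 : Metric.infDist x' (P : Set (EuclideanSpace ℝ (Fin 2))) ≤ dist x' p :=
    Metric.infDist_le_dist_of_mem (by exact_mod_cast hp)
  ext y
  simp only [Set.mem_inter_iff, Metric.mem_ball, Set.mem_empty_iff_false, iff_false]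
  rintro ⟨hy1, hy2⟩
  have htri : dist x x' ≤ dist x y + dist y x' := dist_triangle x y x'
  rw [dist_comm x y] at htri
  rw [dist_comm x' p] at h2
  have : dist x x' < dist x p + dist p x' := by
    calc dist x x' ≤ dist y x + dist y x' := htri
    _ < _ := by
        apply add_lt_add_of_lt_of_le (lt_of_lt_of_le hy1 h1)
        exact le_of_lt (lt_of_lt_of_le hy2 h2)
  rw [hdxp, hdpx', hdxx'] at this
  linarith
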